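/- (Lemma 1) Let G be a DAG, T_s a DFS arborescence rooted at s, s1 a child of s, u, v ∈ T_{s1}, and z = LCA_{T_s}(u,v) with z ≠ u, v. Then s ∈ J(u,v) if and only if there exists a pair of internally vertex-disjoint directed paths in G from s to u and from s to v such that z lies on one of them. -/

import Mathlib

variable {V : Type*}

/-- A directed graph (given as a relation) is acyclic: no nontrivial closed directed walk. -/
def Acyclic (G : V → V → Prop) : Prop := Irreflexive (Relation.TransGen G)

/-- `l` is a directed path in `G` from `a` to `b`: consecutive vertices are joined by arcs
of `G` and no vertex is repeated. -/
def IsDipath (G : V → V → Prop) (l : List V) (a b : V) : Prop :=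
  l.Chain' G ∧ l.head? = some a ∧ l.getLast? = some b ∧ l.Nodup

/-- The internal vertices of a path (all vertices except the two endpoints). -/
def internalVerts (l : List V) : List V := l.tail.dropLast

/-- `s` is a junction of the pair of distinct vertices `u, v` in `G`: there are directed
paths from `s` to `u` and from `s` to `v` sharing no vertex other than `s`. -/
def IsJunction (G : V → V → Prop) (s u v : V) : Prop :=
  u ≠ v ∧ ∃ p q : List V, IsDipath G p s u ∧ IsDipath G q s v ∧
    ∀ x, x ∈ p → x ∈ q → x = s

/-- `z` is the lowest common ancestor of `u` and `v` in the tree (arborescence) `T`: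
a common ancestor that is a descendant of every common ancestor. -/
def IsTreeLCA (T : V → V → Prop) (u v z : V) : Prop :=
  Relation.ReflTransGen T z u ∧ Relation.ReflTransGen T z v ∧
    ∀ y, Relation.ReflTransGen T y u → Relation.ReflTransGen T y v →
      Relation.ReflTransGen T y z

/-- `s` is a lowest common ancestor of `u, v` in the DAG `G`: a junction of `u, v` such
that there is no directed path from `s` to any other junction of `u, v`. -/
def IsLCA (G : V → V → Prop) (s u v : V) : Prop :=
  IsJunction G s u v ∧
    ∀ s', s' ≠ s → IsJunction G s' u v → ¬ Relation.TransGen G s s'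

/-- A DFS arborescence of `G` rooted at `s`, spanning all descendants of `s`, together
with its post-order numbering and the standard structural properties of depth-first
search: tree arcs are graph arcs, the root has no parent, parents are unique, every
`G`-descendant of `s` is in the tree, `post` is injective on the tree, `post` strictly
decreases from a vertex to its proper tree descendants, the post-order numbers of each
subtree form a contiguous interval, and every graph arc between tree vertices is a
tree/forward arc, a back arc, or a (post-order decreasing) cross arc. -/
structure DFSArborescence (G : V → V → Prop) (s : V) where
  T : V → V → Prop
  post : V → ℕ
  sub : ∀ ⦃a b⦄, T a b → G a b
  root_no_parent : ∀ a, ¬ T a s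
  unique_parent : ∀ ⦃a b c⦄, T a b → T c b → a = c
  verts_reach : ∀ ⦃a b⦄, T a b → Relation.ReflTransGen T s a
  spans : ∀ ⦃v⦄, Relation.ReflTransGen G s v → Relation.ReflTransGen T s v
  post_inj : ∀ ⦃u v⦄, Relation.ReflTransGen T s u → Relation.ReflTransGen T s v →
      post u = post v → u = v
  post_desc : ∀ ⦃u v⦄, Relation.ReflTransGen T s u → Relation.TransGen T u v →
      post v < post u
  post_contig : ∀ ⦃u v x⦄, Relation.ReflTransGen T s u → Relation.ReflTransGen T u v →
      Relation.ReflTransGen T s x → post v ≤ post x → post x ≤ post u →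
      Relation.ReflTransGen T u x
  arc_classify : ∀ ⦃u v⦄, G u v → Relation.ReflTransGen T s u →
      Relation.ReflTransGen T s v →
      Relation.ReflTransGen T u v ∨ Relation.ReflTransGen T v u ∨ post v < post u


section Aux
open Relation
variable {G : V → V → Prop}

variable {G : V → V → Prop}

lemma mem_of_getLast?' {l : List V} {a : V} (h : l.getLast? = some a) : a ∈ l := by
  obtain ⟨hne, heq⟩ := List.mem_getLast?_eq_getLast (show a ∈ l.getLast? from h)
  rw [heq]; exact List.getLast_mem hne

lemma mem_of_head?' {l : List V} {a : V} (h : l.head? = some a) : a ∈ l := by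
  rw [List.eq_cons_of_mem_head? (show a ∈ l.head? from h)]
  exact List.mem_cons_self

lemma mem_tail_of_ne {l : List V} {a x : V} (hh : l.head? = some a) (hx : x ∈ l)
    (hne : x ≠ a) : x ∈ l.tail := by
  rw [List.eq_cons_of_mem_head? (show a ∈ l.head? from hh)] at hx
  rcases List.mem_cons.1 hx with rfl | h
  · exact absurd rfl hne
  · exact h

lemma chain_reach : ∀ {l : List V} {a x : V}, l.Chain' G → l.head? = some a → x ∈ l →
    Relation.ReflTransGen G a x := by
  intro l
  induction l with
  | nil => intro a x _ h hx; simp at hx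
  | cons b t ih =>
    intro a x hc hh hx
    simp only [List.head?_cons, Option.some_inj] at hh
    subst hh
    rcases List.mem_cons.1 hx with rfl | hx
    · exact .refl
    · cases t with
      | nil => simp at hx
      | cons c t' =>
        exact .head (List.isChain_cons_cons.1 hc).1 (ih (List.isChain_cons_cons.1 hc).2 rfl hx)

lemma dipath_reach_head {l : List V} {a b x : V} (h : IsDipath G l a b) (hx : x ∈ l) :
    Relation.ReflTransGen G a x := chain_reach h.1 h.2.1 hx

lemma dipath_reach_last {l : List V} {a b x : V} (h : IsDipath G l a b) (hx : x ∈ l) :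
    Relation.ReflTransGen G x b := by
  obtain ⟨l₁, l₂, rfl⟩ := List.append_of_mem hx
  have hc : (x :: l₂).Chain' G := (List.isChain_append.1 h.1).2.1
  have hl : (x :: l₂).getLast? = some b := by
    rw [← h.2.2.1, List.getLast?_append_cons]
  exact chain_reach hc rfl (mem_of_getLast?' hl)

lemma dipath_prefix {l₁ l₂ : List V} {a b m : V} (h : IsDipath G (l₁ ++ m :: l₂) a b) :
    IsDipath G (l₁ ++ [m]) a m := by
  obtain ⟨hc, hh, hl, hn⟩ := h
  refine ⟨?_, ?_, ?_, ?_⟩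
  · exact hc.prefix ⟨l₂, by simp⟩
  · cases l₁ with
    | nil => simpa using hh
    | cons c t =>
      rw [List.head?_append_of_ne_nil _ (by simp)]
      rwa [List.head?_append_of_ne_nil _ (by simp)] at hh
  · rw [show l₁ ++ [m] = l₁ ++ m :: [] from rfl, List.getLast?_append_cons]; rfl
  · refine List.Nodup.sublist ?_ hn
    exact List.Sublist.append_left (((List.nil_sublist l₂).cons₂ m)) l₁

lemma dipath_concat {l₁ l₂ : List V} {a m b : V} (h₁ : IsDipath G l₁ a m)
    (h₂ : IsDipath G l₂ m b) (hd : ∀ x, x ∈ l₁ → x ∈ l₂ → x = m) :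
    IsDipath G (l₁ ++ l₂.tail) a b := by
  obtain ⟨hc₁, hh₁, hl₁, hn₁⟩ := h₁
  obtain ⟨hc₂, hh₂, hl₂, hn₂⟩ := h₂
  have hl₂e : l₂ = m :: l₂.tail := List.eq_cons_of_mem_head? (show m ∈ l₂.head? from hh₂)
  have hl₁ne : l₁ ≠ [] := by rintro rfl; simp at hh₁
  have hmnt : m ∉ l₂.tail := by
    intro hm
    rw [hl₂e] at hn₂
    exact (List.nodup_cons.1 hn₂).1 hm
  cases ht : l₂.tail with
  | nil =>
    have hbm : b = m := by
      rw [hl₂e, ht] at hl₂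
      simpa using hl₂.symm
    subst hbm
    simpa using ⟨hc₁, hh₁, hl₁, hn₁⟩
  | cons c t' =>
    rw [← ht]
    refine ⟨?_, ?_, ?_, ?_⟩
    · refine List.isChain_append.2 ⟨hc₁, ?_, ?_⟩
      · rw [hl₂e] at hc₂; exact hc₂.tail
      · intro x hx y hy
        rw [hl₁] at hx
        have hx' : x = m := by simpa using hx.symm
        subst hx'
        rw [ht] at hy
        have hy' : y = c := by simpa using hy.symm
        subst hy'
        have : l₂.Chain' G := hc₂
        rw [hl₂e, ht] at this
        exact (List.isChain_cons_cons.1 this).1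
    · rw [List.head?_append_of_ne_nil _ hl₁ne]; exact hh₁
    · rw [List.getLast?_append_of_ne_nil _ (by rw [ht]; simp : l₂.tail ≠ [])]
      rw [hl₂e] at hl₂
      rw [ht] at hl₂ ⊢
      rwa [List.getLast?_cons_cons] at hl₂
    · refine List.nodup_append.2 ⟨hn₁, ?_, ?_⟩
      · rw [hl₂e] at hn₂; exact (List.nodup_cons.1 hn₂).2
      · intro x hx y hx' hxy; subst hxy
        have : x ∈ l₂ := by rw [hl₂e]; exact List.mem_cons_of_mem _ hx'
        exact hmnt ((hd x hx this) ▸ hx')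

lemma exists_min_post {l : List V} {P : V → Prop} (f : V → ℕ) (h : ∃ x ∈ l, P x) :
    ∃ m ∈ l, P m ∧ ∀ x ∈ l, P x → f m ≤ f x := by
  classical
  induction l with
  | nil => simp at h
  | cons a t ih =>
    by_cases hPa : P a
    · by_cases ht : ∃ x ∈ t, P x
      · obtain ⟨m, hm, hPm, hmin⟩ := ih ht
        by_cases hle : f m ≤ f a
        · refine ⟨m, List.mem_cons_of_mem _ hm, hPm, ?_⟩
          intro x hx hPx
          rcases List.mem_cons.1 hx with rfl | hx
          · exact hle
          · exact hmin x hx hPx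
        · refine ⟨a, List.mem_cons_self, hPa, ?_⟩
          intro x hx hPx
          rcases List.mem_cons.1 hx with rfl | hx
          · exact le_rfl
          · exact le_trans (le_of_not_ge hle) (hmin x hx hPx)
      · refine ⟨a, List.mem_cons_self, hPa, ?_⟩
        intro x hx hPx
        rcases List.mem_cons.1 hx with rfl | hx
        · exact le_rfl
        · exact absurd ⟨x, hx, hPx⟩ ht
    · obtain ⟨x, hx, hPx⟩ := h
      rcases List.mem_cons.1 hx with rfl | hx
      · exact absurd hPx hPa
      · obtain ⟨m, hm, hPm, hmin⟩ := ih ⟨x, hx, hPx⟩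
        refine ⟨m, List.mem_cons_of_mem _ hm, hPm, ?_⟩
        intro y hy hPy
        rcases List.mem_cons.1 hy with rfl | hy
        · exact absurd hPy hPa
        · exact hmin y hy hPy


lemma mem_tail_facts {l : List V} {a b : V} (h : IsDipath G l a b) {x : V} (hx : x ∈ l.tail) :
    x ∈ l ∧ x ≠ a := by
  have hcons : l = a :: l.tail := List.eq_cons_of_mem_head? (show a ∈ l.head? from h.2.1)
  refine ⟨List.mem_of_mem_tail hx, ?_⟩
  rintro rfl
  have hnd := h.2.2.2
  rw [hcons] at hnd
  exact (List.nodup_cons.1 hnd).1 hx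

lemma mem_prefix_sub {l₁ l₂ : List V} {m x : V} (hx : x ∈ l₁ ++ [m]) : x ∈ l₁ ++ m :: l₂ := by
  rcases List.mem_append.1 hx with h | h
  · exact List.mem_append_left _ h
  · have hxm : x = m := by simpa using h
    subst hxm; exact List.mem_append_right _ (List.mem_cons_self)

section Arb
variable {s : V} (A : DFSArborescence G s)

lemma T_mono {a b : V} (h : Relation.ReflTransGen A.T a b) : Relation.ReflTransGen G a b :=
  Relation.ReflTransGen.mono (r := A.T) (p := G) (fun _ _ hab => A.sub hab) _ _ h

lemma T_acyc (hG : Acyclic G) {a : V} (h : Relation.TransGen A.T a a) : False :=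
  hG _ (Relation.TransGen.mono (r := A.T) (p := G) (fun _ _ hab => A.sub hab) _ _ h)

lemma arc_dec (hG : Acyclic G) {a b : V} (hab : G a b) (ha : Relation.ReflTransGen A.T s a)
    (hb : Relation.ReflTransGen A.T s b) : A.post b < A.post a := by
  rcases A.arc_classify hab ha hb with h | h | h
  · rcases Relation.reflTransGen_iff_eq_or_transGen.1 h with rfl | h
    · exact absurd (Relation.TransGen.single hab) (hG _)
    · exact A.post_desc ha h
  · rcases Relation.reflTransGen_iff_eq_or_transGen.1 h with rfl | h
    · exact absurd (Relation.TransGen.single hab) (hG _)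
    · exact absurd ((Relation.TransGen.single hab).trans
        (Relation.TransGen.mono (r := A.T) (p := G) (fun _ _ hxy => A.sub hxy) _ _ h)) (hG _)
  · exact h

lemma reach_post_le (hG : Acyclic G) {a b : V} (h : Relation.ReflTransGen G a b)
    (ha : Relation.ReflTransGen A.T s a) : A.post b ≤ A.post a := by
  induction h with
  | refl => exact le_rfl
  | @tail c d h1 h2 ih =>
    have hc : Relation.ReflTransGen A.T s c := A.spans ((T_mono A ha).trans h1)
    have hd : Relation.ReflTransGen A.T s d :=
      A.spans (((T_mono A ha).trans h1).tail h2)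
    exact le_trans (le_of_lt (arc_dec A hG h2 hc hd)) ih

lemma tree_post_le {a b : V} (h : Relation.ReflTransGen A.T a b)
    (ha : Relation.ReflTransGen A.T s a) : A.post b ≤ A.post a := by
  rcases Relation.reflTransGen_iff_eq_or_transGen.1 h with rfl | h
  · exact le_rfl
  · exact (A.post_desc ha h).le

lemma tree_post_lt {a b : V} (h : Relation.ReflTransGen A.T a b) (hne : a ≠ b)
    (ha : Relation.ReflTransGen A.T s a) : A.post b < A.post a := by
  rcases Relation.reflTransGen_iff_eq_or_transGen.1 h with heq | h
  · exact absurd heq.symm hne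
  · exact A.post_desc ha h

lemma tree_antisymm {a b : V} (h₁ : Relation.ReflTransGen A.T a b)
    (h₂ : Relation.ReflTransGen A.T b a) (ha : Relation.ReflTransGen A.T s a) : a = b := by
  by_contra hne
  have k1 := tree_post_lt A h₁ hne ha
  have k2 := tree_post_lt A h₂ (Ne.symm hne) (ha.trans h₁)
  omega

lemma anc_comparable {a c : V} (hac : Relation.ReflTransGen A.T a c) :
    ∀ {b}, Relation.ReflTransGen A.T b c →
      Relation.ReflTransGen A.T a b ∨ Relation.ReflTransGen A.T b a := by
  induction hac with
  | refl => intro b hbc; exact Or.inr hbc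
  | @tail c' c h' hT ih =>
    intro b hbc
    rcases Relation.ReflTransGen.cases_tail hbc with heq | ⟨d, hbd, hdc⟩
    · exact Or.inl (heq ▸ h'.tail hT)
    · have hd : d = c' := A.unique_parent hdc hT
      subst hd
      exact ih hbd

lemma exists_treePath (hG : Acyclic G) {a b : V} (hab : Relation.ReflTransGen A.T a b) :
    ∃ l, IsDipath G l a b ∧
      ∀ x ∈ l, Relation.ReflTransGen A.T a x ∧ Relation.ReflTransGen A.T x b := by
  induction hab with
  | refl =>
    refine ⟨[a], ⟨List.isChain_singleton a, rfl, rfl, by simp⟩, ?_⟩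
    intro x hx
    have hx' : x = a := by simpa using hx
    subst hx'
    exact ⟨.refl, .refl⟩
  | @tail b c hab hbc ih =>
    obtain ⟨l, ⟨hc, hh, hl, hn⟩, hmem⟩ := ih
    have hlne : l ≠ [] := by rintro rfl; simp at hh
    refine ⟨l ++ [c], ⟨?_, ?_, ?_, ?_⟩, ?_⟩
    · refine List.isChain_append.2 ⟨hc, by simp, ?_⟩
      intro x hx y hy
      rw [hl] at hx
      have hx' : x = b := by simpa using hx.symm
      have hy' : y = c := by simpa using hy.symm
      subst hx'; subst hy'
      exact A.sub hbc
    · rw [List.head?_append_of_ne_nil _ hlne]; exact hh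
    · rw [show l ++ [c] = l ++ c :: [] from rfl, List.getLast?_append_cons]; rfl
    · refine List.nodup_append.2 ⟨hn, by simp, ?_⟩
      intro x hx y hx' hxy; subst hxy
      have hx'' : x = c := by simpa using hx'
      subst hx''
      exact T_acyc A hG (Relation.TransGen.tail' (hmem _ hx).2 hbc)
    · intro x hx
      rcases List.mem_append.1 hx with hx | hx
      · exact ⟨(hmem x hx).1, (hmem x hx).2.tail hbc⟩
      · have hx' : x = c := by simpa using hx
        subst hx'
        exact ⟨hab.tail hbc, .refl⟩

lemma mem_path_reach {l : List V} {b x : V} (hp : IsDipath G l s b) (hx : x ∈ l) :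
    Relation.ReflTransGen A.T s x := A.spans (dipath_reach_head hp hx)

lemma on_path_in_subtree (hG : Acyclic G) {r : List V} {a e t y : V} (hr : IsDipath G r a e)
    (hst : Relation.ReflTransGen A.T s t) (hte : Relation.ReflTransGen A.T t e) (hy : y ∈ r)
    (hsy : Relation.ReflTransGen A.T s y) (hle : A.post y ≤ A.post t) :
    Relation.ReflTransGen A.T t y := by
  have h1 : Relation.ReflTransGen G y e := dipath_reach_last hr hy
  have h2 : A.post e ≤ A.post y := reach_post_le A hG h1 hsy
  exact A.post_contig hst hte hsy h2 hle

lemma sib_not_le {z z1 z2 : V} (hsz : Relation.ReflTransGen A.T s z) (h1 : A.T z z1)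
    (h2 : A.T z z2) (hne : z1 ≠ z2) : ¬ Relation.ReflTransGen A.T z1 z2 := by
  intro h
  rcases Relation.ReflTransGen.cases_tail h with heq | ⟨d, hd, hdz⟩
  · exact hne heq.symm
  · have hdz' : d = z := A.unique_parent hdz h2
    rw [hdz'] at hd
    have hz1 : Relation.ReflTransGen A.T s z1 := hsz.tail h1
    have k1 : A.post z ≤ A.post z1 := tree_post_le A hd hz1
    have k2 : A.post z1 < A.post z := A.post_desc hsz (Relation.TransGen.single h1)
    omega

lemma main_construct (hG : Acyclic G) {u v z z1 z2 : V} {p q : List V}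
    (hsz : Relation.ReflTransGen A.T s z) (hsnez : s ≠ z)
    (hz1 : A.T z z1) (hz2 : A.T z z2) (hne12 : z1 ≠ z2)
    (hz1u : Relation.ReflTransGen A.T z1 u) (hz2v : Relation.ReflTransGen A.T z2 v)
    (hlt : A.post z1 < A.post z2)
    (hp : IsDipath G p s u) (hq : IsDipath G q s v)
    (hdisj : ∀ x, x ∈ p → x ∈ q → x = s) (hzp : z ∉ p) (hzq : z ∉ q) :
    ∃ p' q' : List V, IsDipath G p' s u ∧ IsDipath G q' s v ∧
      (∀ x, x ∈ p' → x ∈ q' → x = s) ∧ (z ∈ p' ∨ z ∈ q') := by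
  have hsz1 : Relation.ReflTransGen A.T s z1 := hsz.tail hz1
  have hsz2 : Relation.ReflTransGen A.T s z2 := hsz.tail hz2
  have hzu : Relation.ReflTransGen A.T z u := Relation.ReflTransGen.head hz1 hz1u
  have hzv : Relation.ReflTransGen A.T z v := Relation.ReflTransGen.head hz2 hz2v
  have hpz1 : A.post z1 < A.post z := A.post_desc hsz (.single hz1)
  have hpz2 : A.post z2 < A.post z := A.post_desc hsz (.single hz2)
  have hs12 : ¬ Relation.ReflTransGen A.T z1 z2 := sib_not_le A hsz hz1 hz2 hne12
  have hs21 : ¬ Relation.ReflTransGen A.T z2 z1 := sib_not_le A hsz hz2 hz1 hne12.symm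
  have hsp : s ∈ p := mem_of_head?' hp.2.1
  obtain ⟨m, hmpq, ⟨hmz, hmnez⟩, hmin⟩ :=
    exists_min_post (l := p ++ q) (P := fun x => Relation.ReflTransGen A.T x z ∧ x ≠ z) A.post
      ⟨s, List.mem_append_left _ hsp, hsz, hsnez⟩
  have hsm : Relation.ReflTransGen A.T s m := by
    rcases anc_comparable A hsz hmz with h | h
    · exact h
    · rcases Relation.ReflTransGen.cases_tail h with heq | ⟨d, hd, hds⟩
      · cases heq; exact .refl
      · exact absurd hds (A.root_no_parent d)
  have hpmz : A.post z < A.post m := tree_post_lt A hmz hmnez hsm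
  obtain ⟨Lmz, hLmz, hLmzMem⟩ := exists_treePath A hG hmz
  obtain ⟨Lzu, hLzu, hLzuMem⟩ := exists_treePath A hG hzu
  obtain ⟨Lzv, hLzv, hLzvMem⟩ := exists_treePath A hG hzv
  have hzLmz : z ∈ Lmz := mem_of_getLast?' hLmz.2.2.1
  have hIzu : ∀ x, x ∈ Lmz → x ∈ Lzu → x = z := by
    intro x h1 h2
    exact tree_antisymm A (hLmzMem x h1).2 (hLzuMem x h2).1 (hsm.trans (hLmzMem x h1).1)
  have hIzv : ∀ x, x ∈ Lmz → x ∈ Lzv → x = z := by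
    intro x h1 h2
    exact tree_antisymm A (hLmzMem x h1).2 (hLzvMem x h2).1 (hsm.trans (hLmzMem x h1).1)
  have hLmzu : IsDipath G (Lmz ++ Lzu.tail) m u := dipath_concat hLmz hLzu hIzu
  have hLmzv : IsDipath G (Lmz ++ Lzv.tail) m v := dipath_concat hLmz hLzv hIzv
  -- facts about members of the lower tree-path tails
  have hLzuT : ∀ x ∈ Lzu.tail,
      Relation.ReflTransGen A.T z x ∧ x ≠ z ∧ Relation.ReflTransGen A.T x u := by
    intro x hx
    obtain ⟨hxl, hxne⟩ := mem_tail_facts hLzu hx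
    exact ⟨(hLzuMem x hxl).1, hxne, (hLzuMem x hxl).2⟩
  have hLzvT : ∀ x ∈ Lzv.tail,
      Relation.ReflTransGen A.T z x ∧ x ≠ z ∧ Relation.ReflTransGen A.T x v := by
    intro x hx
    obtain ⟨hxl, hxne⟩ := mem_tail_facts hLzv hx
    exact ⟨(hLzvMem x hxl).1, hxne, (hLzvMem x hxl).2⟩
  -- the case analysis `z1 →* x or x →* z` for x with x →* u and z →* x
  have hcaseu : ∀ x, Relation.ReflTransGen A.T x u →
      Relation.ReflTransGen A.T z1 x ∨ Relation.ReflTransGen A.T x z := by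
    intro x hxu
    rcases anc_comparable A hxu hz1u with hcmp | hcmp
    · rcases Relation.ReflTransGen.cases_tail hcmp with heq | ⟨d, hxd, hdz1⟩
      · exact Or.inl (by rw [heq])
      · have hdz : d = z := A.unique_parent hdz1 hz1
        rw [hdz] at hxd
        exact Or.inr hxd
    · exact Or.inl hcmp
  have hcasev : ∀ x, Relation.ReflTransGen A.T x v →
      Relation.ReflTransGen A.T z2 x ∨ Relation.ReflTransGen A.T x z := by
    intro x hxv
    rcases anc_comparable A hxv hz2v with hcmp | hcmp
    · rcases Relation.ReflTransGen.cases_tail hcmp with heq | ⟨d, hxd, hdz2⟩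
      · exact Or.inl (by rw [heq])
      · have hdz : d = z := A.unique_parent hdz2 hz2
        rw [hdz] at hxd
        exact Or.inr hxd
    · exact Or.inl hcmp
  by_cases hmp : m ∈ p
  · -- Case A : reroute p through m, z, z1 to u
    obtain ⟨p₁, p₂, rfl⟩ := List.append_of_mem hmp
    have hpref : IsDipath G (p₁ ++ [m]) s m := dipath_prefix hp
    have hkey : ∀ x, x ∈ p₁ ++ [m] → x ∈ Lmz ++ Lzu.tail → x = m := by
      intro x hx hx2
      have hxp : x ∈ p₁ ++ m :: p₂ := mem_prefix_sub hx
      have hsx : Relation.ReflTransGen A.T s x := mem_path_reach A hp hxp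
      have hxm : A.post m ≤ A.post x := reach_post_le A hG (dipath_reach_last hpref hx) hsx
      rcases List.mem_append.1 hx2 with h2 | h2
      · exact A.post_inj hsx hsm (le_antisymm (tree_post_le A (hLmzMem x h2).1 hsm) hxm)
      · obtain ⟨hzx, hxnez, hxu⟩ := hLzuT x h2
        have h3 : A.post x < A.post z := tree_post_lt A hzx (Ne.symm hxnez) hsz
        exfalso; omega
    have hp' : IsDipath G ((p₁ ++ [m]) ++ (Lmz ++ Lzu.tail).tail) s u :=
      dipath_concat hpref hLmzu hkey
    have hzin : z ∈ (Lmz ++ Lzu.tail).tail :=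
      mem_tail_of_ne hLmzu.2.1 (List.mem_append_left _ hzLmz) (Ne.symm hmnez)
    refine ⟨_, q, hp', hq, ?_, Or.inl (List.mem_append_right _ hzin)⟩
    intro x hx hxq
    rcases List.mem_append.1 hx with hx | hx
    · exact hdisj x (mem_prefix_sub hx) hxq
    · have hx' : x ∈ Lmz ++ Lzu.tail := List.mem_of_mem_tail hx
      have hsx : Relation.ReflTransGen A.T s x := mem_path_reach A hq hxq
      rcases List.mem_append.1 hx' with h2 | h2
      · obtain ⟨hmx, hxz⟩ := hLmzMem x h2
        by_cases hxez : x = z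
        · exact absurd (hxez ▸ hxq) hzq
        · have hSx := hmin x (List.mem_append_right _ hxq) ⟨hxz, hxez⟩
          have h3 : A.post x ≤ A.post m := tree_post_le A hmx hsm
          have hxm : x = m := A.post_inj hsx hsm (le_antisymm h3 hSx)
          rw [hxm] at hxq ⊢
          exact hdisj m hmp hxq
      · obtain ⟨hzx, hxnez, hxu⟩ := hLzuT x h2
        rcases hcaseu x hxu with hcase | hcase
        · have h3 : A.post x ≤ A.post z1 := tree_post_le A hcase hsz1
          have h4 : Relation.ReflTransGen A.T z2 x :=
            on_path_in_subtree A hG hq hsz2 hz2v hxq hsx (le_trans h3 hlt.le)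
          rcases anc_comparable A hcase h4 with hcc | hcc
          · exact absurd hcc hs12
          · exact absurd hcc hs21
        · exact absurd (tree_antisymm A hcase hzx hsx) hxnez
  · have hmq : m ∈ q := by
      rcases List.mem_append.1 hmpq with h | h
      · exact absurd h hmp
      · exact h
    obtain ⟨q₁, q₂, rfl⟩ := List.append_of_mem hmq
    have hqref : IsDipath G (q₁ ++ [m]) s m := dipath_prefix hq
    have hkeyq : ∀ (L : List V), (∀ x ∈ L.tail, Relation.ReflTransGen A.T z x ∧ x ≠ z) →
        ∀ x, x ∈ q₁ ++ [m] → x ∈ Lmz ++ L.tail → x = m := by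
      intro L hLT x hx hx2
      have hxq : x ∈ q₁ ++ m :: q₂ := mem_prefix_sub hx
      have hsx : Relation.ReflTransGen A.T s x := mem_path_reach A hq hxq
      have hxm : A.post m ≤ A.post x := reach_post_le A hG (dipath_reach_last hqref hx) hsx
      rcases List.mem_append.1 hx2 with h2 | h2
      · exact A.post_inj hsx hsm (le_antisymm (tree_post_le A (hLmzMem x h2).1 hsm) hxm)
      · obtain ⟨hzx, hxnez⟩ := hLT x h2
        have h3 : A.post x < A.post z := tree_post_lt A hzx (Ne.symm hxnez) hsz
        exfalso; omega
    by_cases hPD : ∃ d ∈ p, Relation.ReflTransGen A.T z2 d ∧ Relation.ReflTransGen A.T d v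
    · -- Case B2 : swap targets
      obtain ⟨d, hdp, hz2d, hdv⟩ := hPD
      obtain ⟨Ldv, hLdv, hLdvMem⟩ := exists_treePath A hG hdv
      obtain ⟨p₁, p₂, rfl⟩ := List.append_of_mem hdp
      have hpref : IsDipath G (p₁ ++ [d]) s d := dipath_prefix hp
      have hsd : Relation.ReflTransGen A.T s d := mem_path_reach A hp hdp
      have hpdz2 : A.post d ≤ A.post z2 := tree_post_le A hz2d hsz2
      have hkeyd : ∀ x, x ∈ p₁ ++ [d] → x ∈ Ldv → x = d := by
        intro x hx hx2
        have hxp : x ∈ p₁ ++ d :: p₂ := mem_prefix_sub hx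
        have hsx : Relation.ReflTransGen A.T s x := mem_path_reach A hp hxp
        have hxd : A.post d ≤ A.post x := reach_post_le A hG (dipath_reach_last hpref hx) hsx
        exact A.post_inj hsx hsd (le_antisymm (tree_post_le A (hLdvMem x hx2).1 hsd) hxd)
      have hq' : IsDipath G ((p₁ ++ [d]) ++ Ldv.tail) s v := dipath_concat hpref hLdv hkeyd
      have hp' : IsDipath G ((q₁ ++ [m]) ++ (Lmz ++ Lzu.tail).tail) s u :=
        dipath_concat hqref hLmzu (hkeyq Lzu (fun x hx => ⟨(hLzuT x hx).1, (hLzuT x hx).2.1⟩))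
      have hzin : z ∈ (Lmz ++ Lzu.tail).tail :=
        mem_tail_of_ne hLmzu.2.1 (List.mem_append_left _ hzLmz) (Ne.symm hmnez)
      refine ⟨_, _, hp', hq', ?_, Or.inl (List.mem_append_right _ hzin)⟩
      intro x hx hx2
      have hx2' : x ∈ p₁ ++ [d] ∨
          (Relation.ReflTransGen A.T z2 x ∧ Relation.ReflTransGen A.T x v) := by
        rcases List.mem_append.1 hx2 with h | h
        · exact Or.inl h
        · have h' := mem_tail_facts hLdv h
          exact Or.inr ⟨hz2d.trans (hLdvMem x h'.1).1, (hLdvMem x h'.1).2⟩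
      rcases List.mem_append.1 hx with hx1 | hx1
      · have hxq : x ∈ q₁ ++ m :: q₂ := mem_prefix_sub hx1
        have hsx : Relation.ReflTransGen A.T s x := mem_path_reach A hq hxq
        have hxm : A.post m ≤ A.post x := reach_post_le A hG (dipath_reach_last hqref hx1) hsx
        rcases hx2' with hxp | ⟨hz2x, hxv⟩
        · exact hdisj x (mem_prefix_sub hxp) hxq
        · have h3 : A.post x ≤ A.post z2 := tree_post_le A hz2x hsz2
          exfalso; omega
      · have hx1' : x ∈ Lmz ++ Lzu.tail := List.mem_of_mem_tail hx1
        rcases List.mem_append.1 hx1' with h2 | h2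
        · obtain ⟨hmx, hxz⟩ := hLmzMem x h2
          have hsx : Relation.ReflTransGen A.T s x := hsm.trans hmx
          rcases hx2' with hxp | ⟨hz2x, hxv⟩
          · have hxp' : x ∈ p₁ ++ d :: p₂ := mem_prefix_sub hxp
            by_cases hxez : x = z
            · exact absurd (hxez ▸ hxp') hzp
            · have hSx := hmin x (List.mem_append_left _ hxp') ⟨hxz, hxez⟩
              have h3 : A.post x ≤ A.post m := tree_post_le A hmx hsm
              have hxm : x = m := A.post_inj hsx hsm (le_antisymm h3 hSx)
              exact absurd (hxm ▸ hxp') hmp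
          · have h3 : A.post x ≤ A.post z2 := tree_post_le A hz2x hsz2
            have h4 : A.post z ≤ A.post x := tree_post_le A hxz hsx
            exfalso; omega
        · obtain ⟨hzx, hxnez, hxu⟩ := hLzuT x h2
          have hsx : Relation.ReflTransGen A.T s x := hsz.trans hzx
          rcases hcaseu x hxu with hcase | hcase
          · rcases hx2' with hxp | ⟨hz2x, hxv⟩
            · rcases List.mem_append.1 hxp with hxp1 | hxp1
              · have hxd : Relation.ReflTransGen G x d :=
                  dipath_reach_last hpref (List.mem_append_left _ hxp1)
                have h5 : A.post d ≤ A.post x := reach_post_le A hG hxd hsx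
                have h6 : A.post x ≤ A.post z1 := tree_post_le A hcase hsz1
                have h7 : Relation.ReflTransGen A.T z1 d :=
                  on_path_in_subtree A hG hp hsz1 hz1u hdp hsd (le_trans h5 h6)
                rcases anc_comparable A h7 hz2d with hcc | hcc
                · exact absurd hcc hs12
                · exact absurd hcc hs21
              · have hxd : x = d := by simpa using hxp1
                rw [hxd] at hcase
                rcases anc_comparable A hcase hz2d with hcc | hcc
                · exact absurd hcc hs12
                · exact absurd hcc hs21
            · rcases anc_comparable A hcase hz2x with hcc | hcc
              · exact absurd hcc hs12
              · exact absurd hcc hs21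
          · exact absurd (tree_antisymm A hcase hzx hsx) hxnez
    · -- Case B1 : reroute q through m, z, z2 to v
      have hq' : IsDipath G ((q₁ ++ [m]) ++ (Lmz ++ Lzv.tail).tail) s v :=
        dipath_concat hqref hLmzv (hkeyq Lzv (fun x hx => ⟨(hLzvT x hx).1, (hLzvT x hx).2.1⟩))
      have hzin : z ∈ (Lmz ++ Lzv.tail).tail :=
        mem_tail_of_ne hLmzv.2.1 (List.mem_append_left _ hzLmz) (Ne.symm hmnez)
      refine ⟨p, _, hp, hq', ?_, Or.inr (List.mem_append_right _ hzin)⟩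
      intro x hxp hx2
      rcases List.mem_append.1 hx2 with hx1 | hx1
      · exact hdisj x hxp (mem_prefix_sub hx1)
      · have hx1' : x ∈ Lmz ++ Lzv.tail := List.mem_of_mem_tail hx1
        have hsx : Relation.ReflTransGen A.T s x := mem_path_reach A hp hxp
        rcases List.mem_append.1 hx1' with h2 | h2
        · obtain ⟨hmx, hxz⟩ := hLmzMem x h2
          by_cases hxez : x = z
          · exact absurd (hxez ▸ hxp) hzp
          · have hSx := hmin x (List.mem_append_left _ hxp) ⟨hxz, hxez⟩
            have h3 : A.post x ≤ A.post m := tree_post_le A hmx hsm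
            have hxm : x = m := A.post_inj hsx hsm (le_antisymm h3 hSx)
            exact absurd (hxm ▸ hxp) hmp
        · obtain ⟨hzx, hxnez, hxv⟩ := hLzvT x h2
          rcases hcasev x hxv with hcase | hcase
          · exact absurd ⟨x, hxp, hcase, hxv⟩ hPD
          · exact absurd (tree_antisymm A hcase hzx hsx) hxnez

end Arb
end Aux

/-- Lemma 1: with `z = LCA_{T_s}(u,v)`, `z ≠ u, v`, the vertex `s` is a junction of
`u, v` iff some pair of internally disjoint witnessing paths passes through `z`. -/
theorem stmt6 (G : V → V → Prop) (hG : Acyclic G) (s : V) (A : DFSArborescence G s)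
    (s1 : V) (h1 : A.T s s1) (u v : V)
    (hu : Relation.ReflTransGen A.T s1 u) (hv : Relation.ReflTransGen A.T s1 v)
    (huv : u ≠ v) (z : V) (hz : IsTreeLCA A.T u v z) (hzu : z ≠ u) (hzv : z ≠ v) :
    IsJunction G s u v ↔
      ∃ p q : List V, IsDipath G p s u ∧ IsDipath G q s v ∧
        (∀ x, x ∈ p → x ∈ q → x = s) ∧ (z ∈ p ∨ z ∈ q) := by
  constructor
  · rintro ⟨-, p, q, hp, hq, hd⟩
    by_cases hzp : z ∈ p
    · exact ⟨p, q, hp, hq, hd, Or.inl hzp⟩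
    by_cases hzq : z ∈ q
    · exact ⟨p, q, hp, hq, hd, Or.inr hzq⟩
    obtain ⟨hzu', hzv', hlca⟩ := hz
    have hs1z : Relation.ReflTransGen A.T s1 z := hlca s1 hu hv
    have hsz : Relation.ReflTransGen A.T s z := Relation.ReflTransGen.head h1 hs1z
    have hsnez : s ≠ z := by
      rintro rfl
      rcases Relation.ReflTransGen.cases_tail hs1z with heq | ⟨d, hd', hds⟩
      · rw [← heq] at h1
        exact hG _ (Relation.TransGen.single (A.sub h1))
      · exact A.root_no_parent d hds
    have hchild : ∀ w, Relation.ReflTransGen A.T z w → z ≠ w →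
        ∃ c, A.T z c ∧ Relation.ReflTransGen A.T c w := by
      intro w hw hne
      rcases Relation.reflTransGen_iff_eq_or_transGen.1 hw with heq | ht
      · exact absurd heq.symm hne
      · exact Relation.TransGen.head'_iff.1 ht
    obtain ⟨z1, hz1, hz1u⟩ := hchild u hzu' hzu
    obtain ⟨z2, hz2, hz2v⟩ := hchild v hzv' hzv
    have hne12 : z1 ≠ z2 := by
      rintro rfl
      have h3 : Relation.ReflTransGen A.T z1 z := hlca z1 hz1u hz2v
      have k1 : A.post z ≤ A.post z1 := tree_post_le A h3 (hsz.tail hz1)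
      have k2 : A.post z1 < A.post z := A.post_desc hsz (.single hz1)
      omega
    rcases lt_trichotomy (A.post z1) (A.post z2) with hlt | heq | hgt
    · exact main_construct A hG hsz hsnez hz1 hz2 hne12 hz1u hz2v hlt hp hq hd hzp hzq
    · exact absurd (A.post_inj (hsz.tail hz1) (hsz.tail hz2) heq) hne12
    · obtain ⟨q', p', hq', hp', hd', hor⟩ :=
        main_construct A hG hsz hsnez hz2 hz1 hne12.symm hz2v hz1u hgt hq hp
          (fun x h1x h2x => hd x h2x h1x) hzq hzp
      exact ⟨p', q', hp', hq', fun x h1x h2x => hd' x h2x h1x, hor.symm⟩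
  · rintro ⟨p, q, hp, hq, hd, -⟩
    exact ⟨huv, p, q, hp, hq, hd⟩
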